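/- Let V be a finite set of monomials of degree d in the polynomial ring K[x_1,...,x_n], let u = gcd(V), and write V = u·V' for a set V' of monomials. Then V is a Gotzmann set if and only if V' is a Gotzmann set. -/
import Mathlib


open Finset

/-- Monomials of `K[x_1,…,x_n]` are encoded as exponent vectors `Fin n → ℕ`.
`mulVarsOn S W = {x_j · w : w ∈ W, j ∈ S}`. -/
def mulVarsOn {n : ℕ} (S : Finset (Fin n)) (W : Finset (Fin n → ℕ)) :
    Finset (Fin n → ℕ) :=
  W.biUnion fun v => S.image fun j => v + Pi.single j 1

/-- `MV = {x_j · v : v ∈ V, 1 ≤ j ≤ n}`. -/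
def mulVars {n : ℕ} (W : Finset (Fin n → ℕ)) : Finset (Fin n → ℕ) :=
  mulVarsOn Finset.univ W

/-- `IsBinRep m h p f` says that `h = ∑_{j=p}^{m} C(f j + j, j)` is the `m`-th
binomial representation of `h`: `1 ≤ p ≤ m` and `f` is weakly increasing on `[p,m]`. -/
def IsBinRep (m h p : ℕ) (f : ℕ → ℕ) : Prop :=
  1 ≤ p ∧ p ≤ m ∧ (∀ j k, p ≤ j → j ≤ k → k ≤ m → f j ≤ f k) ∧
    h = ∑ j ∈ Finset.Icc p m, Nat.choose (f j + j) j

/-- `h^{<m>} = ∑_{j=p}^{m} C(f j + j + 1, j)` for the `m`-th binomial representation `(p, f)`. -/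
def upVal (m p : ℕ) (f : ℕ → ℕ) : ℕ :=
  ∑ j ∈ Finset.Icc p m, Nat.choose (f j + j + 1) j

/-- `h_{<<m>>} = ∑_{j=p}^{m} C(f j + j - 1, j - 1)` for the `m`-th binomial representation `(p, f)`. -/
def downVal (m p : ℕ) (f : ℕ → ℕ) : ℕ :=
  ∑ j ∈ Finset.Icc p m, Nat.choose (f j + j - 1) (j - 1)

/-- `W` is a Gotzmann set with respect to the set of variables `S`:
either `W = ∅`, or (in at most one variable) `|SW| = |W|`, or
`|SW| = |W|^{<|S|-1>}` computed from the `(|S|-1)`-th binomial representation of `|W|`. -/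
def IsGotzmannOn {n : ℕ} (S : Finset (Fin n)) (W : Finset (Fin n → ℕ)) : Prop :=
  W = ∅ ∨ (S.card ≤ 1 ∧ (mulVarsOn S W).card = W.card) ∨
    ∃ p f, IsBinRep (S.card - 1) W.card p f ∧
      (mulVarsOn S W).card = upVal (S.card - 1) p f

/-- `V` is a Gotzmann set of monomials of `K[x_1,…,x_n]`: `|MV| = |V|^{<n-1>}`. -/
def IsGotzmann {n : ℕ} (W : Finset (Fin n → ℕ)) : Prop :=
  IsGotzmannOn Finset.univ W

/-- The exponent vector of `gcd(V)` (pointwise minimum of the exponent vectors). -/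
noncomputable def gcdMon {n : ℕ} (V : Finset (Fin n → ℕ)) : Fin n → ℕ :=
  fun j => sInf ((fun v => v j) '' (V : Set (Fin n → ℕ)))

/-- `w` comes strictly earlier than `v` in the lexicographic order on monomials
(`x_1 > x_2 > … > x_n`, larger exponent vector comes earlier). -/
def lexEarlier {n : ℕ} (w v : Fin n → ℕ) : Prop :=
  ∃ i : Fin n, (∀ j, j < i → w j = v j) ∧ v i < w i

/-- `V` is a lexsegment set of monomials of degree `d`: an initial segment of
the monomials of degree `d` in lexicographic order. -/
def IsLexSegment (n d : ℕ) (V : Finset (Fin n → ℕ)) : Prop :=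
  (∀ v ∈ V, ∑ j, v j = d) ∧
    ∀ v ∈ V, ∀ w : Fin n → ℕ, (∑ j, w j = d) → lexEarlier w v → w ∈ V

/-- `V` is strongly stable: for `u ∈ V`, `i < j` with `x_j ∣ u`, also `(x_i/x_j)·u ∈ V`. -/
def IsStronglyStable {n : ℕ} (V : Finset (Fin n → ℕ)) : Prop :=
  ∀ u ∈ V, ∀ i j : Fin n, i < j → 0 < u j →
    (u + Pi.single i 1 - Pi.single j 1) ∈ V

/-- `u` is a fixed empty element of `V` (of degree `d`) for `i`: no monomial of
degree `d` which is under `u` for `i` (all exponents except possibly the `i`-th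
bounded by those of `u`) belongs to `V`. -/
def IsFEE (n d : ℕ) (V : Finset (Fin n → ℕ)) (i : Fin n) (u : Fin n → ℕ) : Prop :=
  u ∉ V ∧ ∀ v : Fin n → ℕ, (∑ j, v j = d) → (∀ j, j ≠ i → v j ≤ u j) → v ∉ V

/-- With `u = gcd(V)` and `V = u·V'`, `V` is Gotzmann iff `V'` is Gotzmann. -/
theorem gotzmann_iff_div_gcd {n : ℕ} (d : ℕ) (V : Finset (Fin n → ℕ))
    (hdeg : ∀ v ∈ V, ∑ j, v j = d) :
    IsGotzmann V ↔ IsGotzmann (V.image fun v => v - gcdMon V) := by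
  classical
  set u := gcdMon V with hu
  have hle : ∀ v ∈ V, ∀ j, u j ≤ v j := by
    intro v hv j
    exact Nat.sInf_le ⟨v, hv, rfl⟩
  have hsub : ∀ v : Fin n → ℕ, (∀ j, u j ≤ v j) → (v - u) + u = v := by
    intro v hv; funext j
    have := hv j
    simp only [Pi.add_apply, Pi.sub_apply]
    omega
  have hinj : ∀ W : Finset (Fin n → ℕ), (∀ w ∈ W, ∀ j, u j ≤ w j) →
      (W.image fun v => v - u).card = W.card := by
    intro W hW
    apply Finset.card_image_of_injOn
    intro a ha b hb h
    have h' : a - u = b - u := h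
    have : (a - u) + u = (b - u) + u := by rw [h']
    rwa [hsub a (hW a ha), hsub b (hW b hb)] at this
  have h1 : (V.image fun v => v - u).card = V.card := hinj V hle
  have key : ∀ v ∈ V, ∀ j : Fin n, (v - u) + Pi.single j 1 = (v + Pi.single j 1) - u := by
    intro v hv j
    funext i
    have h := hle v hv i
    simp only [Pi.add_apply, Pi.sub_apply]
    omega
  have hmul : mulVarsOn Finset.univ (V.image fun v => v - u)
      = (mulVarsOn Finset.univ V).image fun v => v - u := by
    ext w
    simp only [mulVarsOn, Finset.mem_biUnion, Finset.mem_image, Finset.mem_univ, true_and]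
    constructor
    · rintro ⟨v', ⟨v, hv, rfl⟩, j, rfl⟩
      exact ⟨v + Pi.single j 1, ⟨v, hv, j, rfl⟩, (key v hv j).symm⟩
    · rintro ⟨_, ⟨v, hv, j, rfl⟩, rfl⟩
      exact ⟨v - u, ⟨v, hv, rfl⟩, j, key v hv j⟩
  have hmle : ∀ w ∈ mulVarsOn Finset.univ V, ∀ j, u j ≤ w j := by
    intro w hw j
    simp only [mulVarsOn, Finset.mem_biUnion, Finset.mem_image] at hw
    obtain ⟨v, hv, i, -, rfl⟩ := hw
    have := hle v hv j
    simp only [Pi.add_apply]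
    omega
  have h2 : (mulVarsOn Finset.univ (V.image fun v => v - u)).card
      = (mulVarsOn Finset.univ V).card := by
    rw [hmul]; exact hinj _ hmle
  have h3 : (V.image fun v => v - u) = ∅ ↔ V = ∅ := Finset.image_eq_empty
  unfold IsGotzmann IsGotzmannOn
  rw [h1, h2, h3]
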